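/- Pair-priceability implies Pareto-optimality: if ⊳ is pair-priceable for a profile R on m ≥ 2 candidates and there exist candidates x, y such that x ≻ y for every ranking ≻ with R(≻) > 0, then x ⊳ y. -/

import Mathlib

open scoped Classical

noncomputable def outPairs (m : ℕ) : Finset (Fin m × Fin m) :=
  (Finset.univ : Finset (Fin m × Fin m)).filter (fun p => p.1 < p.2)

lemma outPairs_card_le (m : ℕ) : (outPairs m).card ≤ m.choose 2 := by
  have h := Finset.card_le_card_of_injOn (fun p : Fin m × Fin m => ({p.1, p.2} : Finset (Fin m)))
    (s := outPairs m) (t := Finset.univ.powersetCard 2)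
    (fun p hp => by
      simp only [outPairs, Finset.mem_coe, Finset.mem_filter] at hp
      simp [Finset.mem_powersetCard_univ, Finset.card_pair hp.2.ne])
    (fun p hp q hq hpq => by
      simp only [outPairs, Finset.coe_filter, Set.mem_setOf_eq, Finset.mem_univ, true_and] at hp hq
      simp only at hpq
      have h1 : p.1 ∈ ({q.1, q.2} : Finset (Fin m)) := by rw [← hpq]; simp
      have h2 : p.2 ∈ ({q.1, q.2} : Finset (Fin m)) := by rw [← hpq]; simp
      have h3 : q.1 ∈ ({p.1, p.2} : Finset (Fin m)) := by rw [hpq]; simp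
      simp only [Finset.mem_insert, Finset.mem_singleton] at h1 h2 h3
      rcases h1 with h1 | h1 <;> rcases h2 with h2 | h2
      · rw [h1, h2] at hp; exact absurd hp (lt_irrefl _)
      · exact Prod.ext h1 h2
      · rw [h1, h2] at hp; exact absurd hp (not_lt.mpr hq.le)
      · rw [h1, h2] at hp; exact absurd hp (lt_irrefl _))
  simpa [Finset.card_powersetCard, Fintype.card_fin] using h

theorem stmt_12 {m : ℕ} (hm : 2 ≤ m) (R : Equiv.Perm (Fin m) → ℝ)
    (hR0 : ∀ σ, 0 ≤ R σ) (hR1 : ∀ σ, R σ ≤ 1) (hRsum : ∑ σ, R σ = 1)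
    (π : Equiv.Perm (Fin m) → Fin m × Fin m → ℝ)
    (h0 : ∀ σ p, 0 ≤ π σ p ∧ π σ p ≤ 1)
    (h1 : ∀ σ, ∀ p ∈ outPairs m, π σ p ≤ (if σ p.1 < σ p.2 then (1 : ℝ) else 0))
    (h2 : ∀ σ, ∑ p ∈ outPairs m, π σ p ≤ (m.choose 2 : ℝ) * R σ)
    (h3 : ∀ p ∈ outPairs m, ∑ σ, π σ p ≤ 1)
    (h4 : (m.choose 2 : ℝ) - 1 < ∑ σ, ∑ p ∈ outPairs m, π σ p)
    (x y : Fin m) (hxy : ∀ σ : Equiv.Perm (Fin m), 0 < R σ → σ x < σ y) :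
    x < y := by
  by_contra hle
  push_neg at hle
  -- there is a ranking with positive weight
  obtain ⟨σ₀, hσ₀⟩ : ∃ σ, 0 < R σ := by
    by_contra h
    push_neg at h
    have : ∑ σ, R σ ≤ 0 := Finset.sum_nonpos (fun σ _ => h σ)
    linarith
  have hne : x ≠ y := fun h => by
    have := hxy σ₀ hσ₀; rw [h] at this; exact lt_irrefl _ this
  have hyx : y < x := lt_of_le_of_ne hle (fun h => hne h.symm)
  have hmem : (y, x) ∈ outPairs m := by simp [outPairs, hyx]
  -- π σ (y,x) = 0 for all σ
  have hzero : ∀ σ, π σ (y, x) = 0 := by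
    intro σ
    rcases lt_or_eq_of_le (hR0 σ) with hpos | heq
    · have h' := h1 σ (y, x) hmem
      have : ¬ σ y < σ x := not_lt.mpr (hxy σ hpos).le
      rw [if_neg this] at h'
      exact le_antisymm h' (h0 σ _).1
    · have hsum : ∑ p ∈ outPairs m, π σ p ≤ 0 := by
        have := h2 σ; rw [← heq] at this; linarith
      have hz : ∑ p ∈ outPairs m, π σ p = 0 :=
        le_antisymm hsum (Finset.sum_nonneg fun p _ => (h0 σ p).1)
      exact (Finset.sum_eq_zero_iff_of_nonneg (fun p _ => (h0 σ p).1)).1 hz _ hmem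
  -- bound the total
  have hcomm : ∑ σ, ∑ p ∈ outPairs m, π σ p = ∑ p ∈ outPairs m, ∑ σ, π σ p :=
    Finset.sum_comm
  have hsplit : ∑ p ∈ outPairs m, ∑ σ, π σ p
      = ∑ p ∈ (outPairs m).erase (y, x), ∑ σ, π σ p := by
    rw [← Finset.add_sum_erase _ _ hmem]
    simp [hzero]
  have hbound : ∑ p ∈ (outPairs m).erase (y, x), ∑ σ, π σ p
      ≤ ((outPairs m).erase (y, x)).card := by
    calc ∑ p ∈ (outPairs m).erase (y, x), ∑ σ, π σ p
        ≤ ∑ p ∈ (outPairs m).erase (y, x), (1 : ℝ) :=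
          Finset.sum_le_sum fun p hp => h3 p (Finset.mem_of_mem_erase hp)
      _ = _ := by simp
  have hcard : ((outPairs m).erase (y, x)).card = (outPairs m).card - 1 :=
    Finset.card_erase_of_mem hmem
  have hc1 : 1 ≤ (outPairs m).card := Finset.card_pos.mpr ⟨_, hmem⟩
  have hcle : (outPairs m).card ≤ m.choose 2 := outPairs_card_le m
  have hch : 1 ≤ m.choose 2 := le_trans hc1 hcle
  have : (((outPairs m).erase (y, x)).card : ℝ) ≤ (m.choose 2 : ℝ) - 1 := by
    rw [hcard]
    have : (outPairs m).card - 1 ≤ m.choose 2 - 1 := by omega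
    calc ((outPairs m).card - 1 : ℕ) ≤ ((m.choose 2 - 1 : ℕ) : ℝ) := by exact_mod_cast this
      _ = (m.choose 2 : ℝ) - 1 := by
          rw [Nat.cast_sub hch]; simp
  linarith [hcomm ▸ h4, hsplit ▸ hbound]
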